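/- Let (M,L) be a regular symplectic 2n×2n pair of index at most one at infinity, with U₀, U_∞ ∈ ℂ^{2n×ℓ}, U₁ ∈ ℂ^{2n×2n̂} (ℓ = n − n̂) such that M U₀ = 0, L U_∞ = 0, M U₁ = L U₁ Ŝ for an invertible Ŝ, [U₁ | U₀, U_∞]^H J_n [U₁ | U₀, U_∞] = J_{n̂} ⊕ J_ℓ. Given a family of nonsingular Φ^ε ∈ ℂ^{ℓ×ℓ} with ‖Φ^ε‖ ≤ ε, set ΔM^ε = −L U₀ (Φ^ε)^H U_∞^H J and ΔL^ε = M U_∞ Φ^ε U₀^H J, and M^ε = M + ΔM^ε, L^ε = L + ΔL^ε. Then (M^ε, L^ε) is a regular symplectic pair with L^ε invertible, and M^ε U₀ = L^ε U₀ (Φ^ε)^H, M^ε U_∞ Φ^ε = L^ε U_∞, M^ε U₁ = L^ε U₁ Ŝ. -/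

import Mathlib

open Matrix

attribute [local instance] Matrix.normedAddCommGroup

/-- The matrix `J_m = [[0, I_m], [−I_m, 0]]`. -/
def Jmat (m : ℕ) : Matrix (Fin m ⊕ Fin m) (Fin m ⊕ Fin m) ℂ :=
  Matrix.fromBlocks 0 1 (-1) 0

open Polynomial

lemma Jmat_mul_Jmat (m : ℕ) : Jmat m * Jmat m = -1 := by
  ext (i|i) (j|j) <;> simp [Jmat, Matrix.fromBlocks_multiply, Matrix.one_apply]

lemma Jmat_conjTranspose (m : ℕ) : (Jmat m)ᴴ = -(Jmat m) := by
  ext (i|i) (j|j) <;> simp [Jmat, Matrix.one_apply, eq_comm]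

lemma Jmat_det_isUnit (m : ℕ) : IsUnit (Jmat m).det := by
  have h : Jmat m * (-(Jmat m)) = 1 := by
    rw [Matrix.mul_neg, Jmat_mul_Jmat, neg_neg]
  have := congrArg Matrix.det h
  rw [Matrix.det_mul, Matrix.det_one] at this
  exact IsUnit.of_mul_eq_one _ this

lemma eval_det_pencil {m : Type*} [Fintype m] [DecidableEq m]
    (A B : Matrix m m ℂ) (t : ℂ) :
    Polynomial.eval t (Matrix.det (A.map C - (X : ℂ[X]) • B.map C)) = (A - t • B).det := by
  rw [← coe_evalRingHom, RingHom.map_det]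
  congr 1
  ext i j
  simp only [RingHom.mapMatrix_apply, Matrix.map_apply, Matrix.sub_apply, Matrix.smul_apply,
    smul_eq_mul, coe_evalRingHom, eval_sub, eval_mul, eval_X, eval_C]

lemma pencil_one_ne_zero {m : Type*} [Fintype m] [DecidableEq m]
    (A : Matrix m m ℂ) :
    Matrix.det (A.map C - (X : ℂ[X]) • (1 : Matrix m m ℂ).map C) ≠ 0 := by
  have h : A.map C - (X : ℂ[X]) • (1 : Matrix m m ℂ).map C = -(charmatrix A) := by
    ext i j
    by_cases hij : i = j <;>
      simp [hij, charmatrix_apply, Matrix.sub_apply, Matrix.smul_apply, Matrix.one_apply,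
        Matrix.map_apply, Matrix.diagonal]
  rw [h, Matrix.det_neg]
  simp only [ne_eq, mul_eq_zero, not_or]
  exact ⟨pow_ne_zero _ (by norm_num), (Matrix.charpoly_monic A).ne_zero⟩

lemma det_transfer {ι κ : Type*} [Fintype ι] [Fintype κ] [DecidableEq ι] [DecidableEq κ]
    (e : κ ≃ ι) (S : Matrix ι ι ℂ) (A B : Matrix ι κ ℂ) (Q : Matrix κ κ ℂ)
    (h : S * A = B * Q) :
    S.det * (A.submatrix id ⇑e.symm).det = (B.submatrix id ⇑e.symm).det * Q.det := by
  have h2 : (S * A).submatrix id ⇑e.symm = (B * Q).submatrix id ⇑e.symm := by rw [h]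
  rw [Matrix.submatrix_mul S A id id ⇑e.symm Function.bijective_id,
      Matrix.submatrix_mul B Q id ⇑e.symm ⇑e.symm e.symm.bijective,
      Matrix.submatrix_id_id] at h2
  have h3 := congrArg Matrix.det h2
  rwa [Matrix.det_mul, Matrix.det_mul, Matrix.det_submatrix_equiv_self] at h3


/-- Theorem 2.7: perturbation of a regular symplectic pair.  Given the spectral data
`M U₀ = 0`, `L U∞ = 0`, `M U₁ = L U₁ Sh` with `Sh` invertible and the normalization
`[U₁ | U₀, U∞]ᴴ J [U₁ | U₀, U∞] = J_{nh} ⊕ J_ℓ`, for any nonsingular `Φ` with `‖Φ‖ ≤ ε`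
the perturbed pair `(Mᵉ, Lᵉ) = (M − L U₀ Φᴴ U∞ᴴ J, L + M U∞ Φ U₀ᴴ J)` is a regular
symplectic pair with `Lᵉ` invertible, and
`Mᵉ U₀ = Lᵉ U₀ Φᴴ`, `Mᵉ U∞ Φ = Lᵉ U∞`, `Mᵉ U₁ = Lᵉ U₁ Sh`. -/
theorem perturbed_symplectic_pair {n nh ℓ : ℕ} (hn : nh + ℓ = n)
    (M L : Matrix (Fin n ⊕ Fin n) (Fin n ⊕ Fin n) ℂ)
    (hreg : ∃ lam : ℂ, (M - lam • L).det ≠ 0)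
    (hsymp : M * Jmat n * Mᴴ = L * Jmat n * Lᴴ)
    (U₀ Uinf : Matrix (Fin n ⊕ Fin n) (Fin ℓ) ℂ)
    (U₁ : Matrix (Fin n ⊕ Fin n) (Fin nh ⊕ Fin nh) ℂ)
    (Sh : Matrix (Fin nh ⊕ Fin nh) (Fin nh ⊕ Fin nh) ℂ) (hSh : IsUnit Sh.det)
    (hU₀ : M * U₀ = 0) (hUinf : L * Uinf = 0) (hU₁ : M * U₁ = L * U₁ * Sh)
    (hnorm : (Matrix.fromCols U₁ (Matrix.fromCols U₀ Uinf))ᴴ * Jmat n *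
        Matrix.fromCols U₁ (Matrix.fromCols U₀ Uinf) =
      Matrix.fromBlocks (Jmat nh) 0 0 (Jmat ℓ))
    (ε : ℝ) (hε : 0 < ε)
    (Φ : Matrix (Fin ℓ) (Fin ℓ) ℂ) (hΦ : IsUnit Φ.det) (hΦε : ‖Φ‖ ≤ ε)
    (Mε Lε : Matrix (Fin n ⊕ Fin n) (Fin n ⊕ Fin n) ℂ)
    (hMε : Mε = M - L * U₀ * Φᴴ * Uinfᴴ * Jmat n)
    (hLε : Lε = L + M * Uinf * Φ * U₀ᴴ * Jmat n) :
    Mε * Jmat n * Mεᴴ = Lε * Jmat n * Lεᴴ ∧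
    (∃ lam : ℂ, (Mε - lam • Lε).det ≠ 0) ∧
    IsUnit Lε.det ∧
    Mε * U₀ = Lε * U₀ * Φᴴ ∧
    Mε * Uinf * Φ = Lε * Uinf ∧
    Mε * U₁ = Lε * U₁ * Sh := by
  classical
  -- Step 1: extract the normalization identities
  have hnorm' := hnorm
  rw [Matrix.conjTranspose_fromCols_eq_fromRows_conjTranspose, Matrix.fromRows_mul,
    Matrix.fromRows_mul_fromCols] at hnorm'
  rw [Matrix.fromBlocks_inj] at hnorm'
  obtain ⟨h11, h12, h21, h22⟩ := hnorm'
  rw [Matrix.conjTranspose_fromCols_eq_fromRows_conjTranspose, Matrix.fromRows_mul,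
    Matrix.fromRows_mul, Matrix.mul_fromCols, Matrix.mul_fromCols,
    Matrix.fromRows_fromCols_eq_fromBlocks] at h22
  rw [show Jmat ℓ = Matrix.fromBlocks 0 1 (-1) 0 from rfl, Matrix.fromBlocks_inj] at h22
  obtain ⟨k00, k0i, ki0, kii⟩ := h22
  rw [Matrix.conjTranspose_fromCols_eq_fromRows_conjTranspose, Matrix.fromRows_mul,
    Matrix.fromRows_mul, show (0 : Matrix (Fin ℓ ⊕ Fin ℓ) (Fin nh ⊕ Fin nh) ℂ) =
      Matrix.fromRows 0 0 from Matrix.fromRows_zero.symm, Matrix.fromRows_inj.eq_iff] at h21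
  obtain ⟨k01, ki1⟩ := h21
  -- Step 2: derived products
  have k00' : ∀ {p : Type} (X : Matrix (Fin ℓ) p ℂ), U₀ᴴ * (Jmat n * (U₀ * X)) = 0 := by
    intro p X
    calc U₀ᴴ * (Jmat n * (U₀ * X)) = (U₀ᴴ * Jmat n * U₀) * X := by
          simp [Matrix.mul_assoc]
      _ = 0 := by rw [k00, Matrix.zero_mul]
  have kii' : ∀ {p : Type} (X : Matrix (Fin ℓ) p ℂ), Uinfᴴ * (Jmat n * (Uinf * X)) = 0 := by
    intro p X
    calc Uinfᴴ * (Jmat n * (Uinf * X)) = (Uinfᴴ * Jmat n * Uinf) * X := by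
          simp [Matrix.mul_assoc]
      _ = 0 := by rw [kii, Matrix.zero_mul]
  have hJJ : ∀ (X : Matrix (Fin n ⊕ Fin n) (Fin n ⊕ Fin n) ℂ),
      Jmat n * (Jmat n * X) = -X := by
    intro X
    rw [← Matrix.mul_assoc, Jmat_mul_Jmat, Matrix.neg_mul, Matrix.one_mul]
  have hm0 : Mε * U₀ = L * U₀ * Φᴴ := by
    rw [hMε, Matrix.sub_mul, hU₀]
    calc (0 : Matrix _ _ ℂ) - L * U₀ * Φᴴ * Uinfᴴ * Jmat n * U₀
        = 0 - L * U₀ * Φᴴ * (Uinfᴴ * Jmat n * U₀) := by simp [Matrix.mul_assoc]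
      _ = L * U₀ * Φᴴ := by rw [ki0, Matrix.mul_neg, Matrix.mul_one, zero_sub, neg_neg]
  have hl0 : Lε * U₀ = L * U₀ := by
    rw [hLε, Matrix.add_mul]
    calc L * U₀ + M * Uinf * Φ * U₀ᴴ * Jmat n * U₀
        = L * U₀ + M * Uinf * Φ * (U₀ᴴ * Jmat n * U₀) := by simp [Matrix.mul_assoc]
      _ = L * U₀ := by rw [k00, Matrix.mul_zero, add_zero]
  have hmi : Mε * Uinf = M * Uinf := by
    rw [hMε, Matrix.sub_mul]
    calc M * Uinf - L * U₀ * Φᴴ * Uinfᴴ * Jmat n * Uinf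
        = M * Uinf - L * U₀ * Φᴴ * (Uinfᴴ * Jmat n * Uinf) := by simp [Matrix.mul_assoc]
      _ = M * Uinf := by rw [kii, Matrix.mul_zero, sub_zero]
  have hli : Lε * Uinf = M * Uinf * Φ := by
    rw [hLε, Matrix.add_mul, hUinf]
    calc (0 : Matrix _ _ ℂ) + M * Uinf * Φ * U₀ᴴ * Jmat n * Uinf
        = 0 + M * Uinf * Φ * (U₀ᴴ * Jmat n * Uinf) := by simp [Matrix.mul_assoc]
      _ = M * Uinf * Φ := by rw [k0i, Matrix.mul_one, zero_add]
  have hm1 : Mε * U₁ = L * U₁ * Sh := by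
    rw [hMε, Matrix.sub_mul, hU₁]
    calc L * U₁ * Sh - L * U₀ * Φᴴ * Uinfᴴ * Jmat n * U₁
        = L * U₁ * Sh - L * U₀ * Φᴴ * (Uinfᴴ * Jmat n * U₁) := by simp [Matrix.mul_assoc]
      _ = L * U₁ * Sh := by rw [ki1, Matrix.mul_zero, sub_zero]
  have hl1 : Lε * U₁ = L * U₁ := by
    rw [hLε, Matrix.add_mul]
    calc L * U₁ + M * Uinf * Φ * U₀ᴴ * Jmat n * U₁
        = L * U₁ + M * Uinf * Φ * (U₀ᴴ * Jmat n * U₁) := by simp [Matrix.mul_assoc]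
      _ = L * U₁ := by rw [k01, Matrix.mul_zero, add_zero]
  -- Step 3: symplecticity of the perturbed pair
  have hsympε : Mε * Jmat n * Mεᴴ = Lε * Jmat n * Lεᴴ := by
    have hsymp' : M * (Jmat n * Mᴴ) = L * (Jmat n * Lᴴ) := by
      rw [← Matrix.mul_assoc, ← Matrix.mul_assoc]; exact hsymp
    rw [hMε, hLε]
    simp only [Matrix.conjTranspose_sub, Matrix.conjTranspose_add, Matrix.conjTranspose_mul,
      Jmat_conjTranspose, Matrix.conjTranspose_conjTranspose]
    simp only [Matrix.mul_sub, Matrix.sub_mul, Matrix.mul_add, Matrix.add_mul,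
      Matrix.mul_assoc, Matrix.mul_neg, Matrix.neg_mul, hJJ, k00', kii',
      Matrix.mul_zero, Matrix.zero_mul, neg_neg, sub_eq_add_neg, hsymp']
    abel
  -- Step 4: choice of a good lambda
  obtain ⟨lam, hlam0, hG, hd1, hd2, hd3⟩ : ∃ lam : ℂ, lam ≠ 0 ∧ (M - lam • L).det ≠ 0 ∧
      (Sh - lam • 1).det ≠ 0 ∧ (Φᴴ - lam • 1).det ≠ 0 ∧
      ((1 : Matrix (Fin ℓ) (Fin ℓ) ℂ) - lam • Φ).det ≠ 0 := by
    obtain ⟨l0, hl00⟩ := hreg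
    set p₁ : ℂ[X] := Matrix.det (M.map C - (X : ℂ[X]) • L.map C) with hp₁def
    set p₂ : ℂ[X] := Matrix.det (Sh.map C - (X : ℂ[X]) •
      (1 : Matrix (Fin nh ⊕ Fin nh) (Fin nh ⊕ Fin nh) ℂ).map C) with hp₂def
    set p₃ : ℂ[X] := Matrix.det (Φᴴ.map C - (X : ℂ[X]) •
      (1 : Matrix (Fin ℓ) (Fin ℓ) ℂ).map C) with hp₃def
    set p₄ : ℂ[X] := Matrix.det ((1 : Matrix (Fin ℓ) (Fin ℓ) ℂ).map C -
      (X : ℂ[X]) • Φ.map C) with hp₄def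
    have hp₁ : p₁ ≠ 0 := fun h => hl00 (by rw [← eval_det_pencil, ← hp₁def, h, eval_zero])
    have hp₂ : p₂ ≠ 0 := pencil_one_ne_zero Sh
    have hp₃ : p₃ ≠ 0 := pencil_one_ne_zero Φᴴ
    have hp₄ : p₄ ≠ 0 := by
      intro h
      have h2 := eval_det_pencil (1 : Matrix (Fin ℓ) (Fin ℓ) ℂ) Φ 0
      rw [← hp₄def, h, eval_zero] at h2
      simp at h2
    have hp : p₁ * p₂ * p₃ * p₄ * X ≠ 0 :=
      mul_ne_zero (mul_ne_zero (mul_ne_zero (mul_ne_zero hp₁ hp₂) hp₃) hp₄) X_ne_zero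
    obtain ⟨lam, hlam⟩ := Infinite.exists_notMem_finset (p₁ * p₂ * p₃ * p₄ * X).roots.toFinset
    have heval : Polynomial.eval lam (p₁ * p₂ * p₃ * p₄ * X) ≠ 0 := by
      intro h
      exact hlam (Multiset.mem_toFinset.mpr (Polynomial.mem_roots'.mpr ⟨hp, h⟩))
    rw [eval_mul, eval_mul, eval_mul, eval_mul, eval_X] at heval
    obtain ⟨⟨⟨⟨h1, h2⟩, h3⟩, h4⟩, h5⟩ := by
      have := heval
      rw [mul_ne_zero_iff, mul_ne_zero_iff, mul_ne_zero_iff, mul_ne_zero_iff] at this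
      exact this
    refine ⟨lam, h5, ?_, ?_, ?_, ?_⟩
    · rwa [hp₁def, eval_det_pencil] at h1
    · rwa [hp₂def, eval_det_pencil] at h2
    · rwa [hp₃def, eval_det_pencil] at h3
    · rwa [hp₄def, eval_det_pencil] at h4
  -- Step 5: determinant bookkeeping via a square reindexing
  let f : Fin nh ⊕ Fin ℓ ≃ Fin n := finSumFinEquiv.trans (finCongr hn)
  let e : ((Fin nh ⊕ Fin nh) ⊕ (Fin ℓ ⊕ Fin ℓ)) ≃ (Fin n ⊕ Fin n) :=
    (Equiv.sumSumSumComm (Fin nh) (Fin nh) (Fin ℓ) (Fin ℓ)).trans (Equiv.sumCongr f f)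
  have hWdet : ((Matrix.fromCols U₁ (Matrix.fromCols U₀ Uinf)).submatrix
      id ⇑e.symm).det ≠ 0 := by
    have h2 := congrArg (fun A => (A.submatrix ⇑e.symm ⇑e.symm).det) hnorm
    rw [Matrix.submatrix_mul _ _ ⇑e.symm id ⇑e.symm Function.bijective_id,
        Matrix.submatrix_mul _ (Jmat n) ⇑e.symm id id Function.bijective_id,
        Matrix.submatrix_id_id, Matrix.det_mul, Matrix.det_mul,
        ← Matrix.conjTranspose_submatrix, Matrix.det_conjTranspose,
        Matrix.det_submatrix_equiv_self, Matrix.det_fromBlocks_zero₂₁] at h2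
    intro h0
    rw [h0] at h2
    simp only [star_zero, zero_mul, mul_zero] at h2
    exact (mul_ne_zero (Jmat_det_isUnit nh).ne_zero (Jmat_det_isUnit ℓ).ne_zero) h2.symm
  have b1 : (M - lam • L) * U₁ = L * U₁ * (Sh - lam • 1) := by
    rw [Matrix.sub_mul, hU₁, Matrix.mul_sub, Matrix.mul_smul, Matrix.mul_one,
      Matrix.smul_mul]
  have b2 : (M - lam • L) * U₀ = (L * U₀) * ((-lam) • (1 : Matrix (Fin ℓ) (Fin ℓ) ℂ)) := by
    rw [Matrix.sub_mul, hU₀, Matrix.smul_mul, Matrix.mul_smul, Matrix.mul_one,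
      zero_sub, neg_smul]
  have b3 : (M - lam • L) * Uinf = (M * Uinf) * (1 : Matrix (Fin ℓ) (Fin ℓ) ℂ) := by
    rw [Matrix.sub_mul, Matrix.smul_mul, hUinf, smul_zero, sub_zero]
    exact (Matrix.mul_one _).symm
  have c1 : (Mε - lam • Lε) * U₁ = L * U₁ * (Sh - lam • 1) := by
    rw [Matrix.sub_mul, hm1, Matrix.smul_mul, hl1, Matrix.mul_sub, Matrix.mul_smul,
      Matrix.mul_one]
  have c2 : (Mε - lam • Lε) * U₀ = (L * U₀) * (Φᴴ - lam • 1) := by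
    rw [Matrix.sub_mul, hm0, Matrix.smul_mul, hl0, Matrix.mul_sub, Matrix.mul_smul,
      Matrix.mul_one]
  have c3 : (Mε - lam • Lε) * Uinf = (M * Uinf) * (1 - lam • Φ) := by
    rw [Matrix.sub_mul, hmi, Matrix.smul_mul, hli, Matrix.mul_sub, Matrix.mul_one,
      Matrix.mul_smul]
  have E1 : (M - lam • L) * (Matrix.fromCols U₁ (Matrix.fromCols U₀ Uinf)) =
      (Matrix.fromCols (L * U₁) (Matrix.fromCols (L * U₀) (M * Uinf))) *
        (Matrix.fromBlocks (Sh - lam • 1) 0 0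
          (Matrix.fromBlocks ((-lam) • (1 : Matrix (Fin ℓ) (Fin ℓ) ℂ)) 0 0 1) : Matrix ((Fin nh ⊕ Fin nh) ⊕ (Fin ℓ ⊕ Fin ℓ)) ((Fin nh ⊕ Fin nh) ⊕ (Fin ℓ ⊕ Fin ℓ)) ℂ) := by
    simp only [Matrix.mul_fromCols, Matrix.fromCols_mul_fromBlocks,
      Matrix.mul_zero, add_zero, zero_add, b1, b2, b3]
  have E2 : Lε * (Matrix.fromCols U₁ (Matrix.fromCols U₀ Uinf)) =
      (Matrix.fromCols (L * U₁) (Matrix.fromCols (L * U₀) (M * Uinf))) *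
        (Matrix.fromBlocks 1 0 0 (Matrix.fromBlocks 1 0 0 Φ) : Matrix ((Fin nh ⊕ Fin nh) ⊕ (Fin ℓ ⊕ Fin ℓ)) ((Fin nh ⊕ Fin nh) ⊕ (Fin ℓ ⊕ Fin ℓ)) ℂ) := by
    simp only [Matrix.mul_fromCols, Matrix.fromCols_mul_fromBlocks,
      Matrix.mul_zero, add_zero, zero_add, Matrix.mul_one, hl1, hl0, hli]
  have E3 : (Mε - lam • Lε) * (Matrix.fromCols U₁ (Matrix.fromCols U₀ Uinf)) =
      (Matrix.fromCols (L * U₁) (Matrix.fromCols (L * U₀) (M * Uinf))) *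
        Matrix.fromBlocks (Sh - lam • 1) 0 0
          (Matrix.fromBlocks (Φᴴ - lam • 1) 0 0 (1 - lam • Φ)) := by
    simp only [Matrix.mul_fromCols, Matrix.fromCols_mul_fromBlocks,
      Matrix.mul_zero, add_zero, zero_add, c1, c2, c3]
  have dE1 := det_transfer e _ _ _ _ E1
  have dE2 := det_transfer e _ _ _ _ E2
  have dE3 := det_transfer e _ _ _ _ E3
  rw [Matrix.det_fromBlocks_zero₂₁, Matrix.det_fromBlocks_zero₂₁] at dE1 dE2 dE3
  rw [Matrix.det_one, Matrix.det_one, one_mul, one_mul] at dE2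
  rw [Matrix.det_one, mul_one, Matrix.det_smul, Matrix.det_one, mul_one] at dE1
  have hTdet : ((Matrix.fromCols (L * U₁)
      (Matrix.fromCols (L * U₀) (M * Uinf))).submatrix id ⇑e.symm).det ≠ 0 := by
    intro h0
    rw [h0, zero_mul] at dE1
    exact (mul_ne_zero hG hWdet) dE1
  have hLεdet : IsUnit Lε.det := by
    rw [isUnit_iff_ne_zero]
    intro h0
    rw [h0, zero_mul] at dE2
    exact (mul_ne_zero hTdet hΦ.ne_zero) dE2.symm
  have hregε : (Mε - lam • Lε).det ≠ 0 := by
    intro h0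
    rw [h0, zero_mul] at dE3
    exact (mul_ne_zero hTdet (mul_ne_zero hd1 (mul_ne_zero hd2 hd3))) dE3.symm
  refine ⟨hsympε, ⟨lam, hregε⟩, hLεdet, ?_, ?_, ?_⟩
  · rw [hm0, hl0]
  · rw [hmi, hli]
  · rw [hm1, hl1]
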